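/- Let F_ij : ℝ → ℝ, i,j = 1,…,m, satisfy |F_ij(u) − F_ij(v)| ≤ L_ij|u − v| for all u,v ∈ ℝ, where L_ij ≥ 0, and let L be the m×m matrix (L_ij). If the spectral radius r(L) of L is less than 1, then the system of equations u_i = Σ_{j=1}^m F_ij(u_j), i = 1,…,m, has a unique solution (u_1,…,u_m) ∈ ℝ^m. -/

import Mathlib

open Matrix Filter Function
open scoped ENNReal NNReal

attribute [local instance] Matrix.linftyOpNormedRing Matrix.linftyOpNormedAlgebra

/-- spectral radius of the complexified matrix is < 1 -/
lemma aux_specrad {m : ℕ} (A : Matrix (Fin m) (Fin m) ℂ)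
    (hr : ∀ μ : ℂ, μ ∈ spectrum ℂ A → ‖μ‖ < 1) :
    spectralRadius ℂ A < 1 := by
  rcases Set.eq_empty_or_nonempty (spectrum ℂ A) with h | h
  · rw [spectralRadius, h]
    simp
  · obtain ⟨μ₀, hμ₀, hmax⟩ := (spectrum.isCompact A).exists_isMaxOn h
      (continuous_norm.continuousOn (s := spectrum ℂ A))
    have h1 : spectralRadius ℂ A ≤ ‖μ₀‖₊ := by
      rw [spectralRadius]
      exact iSup₂_le fun k hk => by
        exact_mod_cast ENNReal.coe_le_coe.mpr (hmax hk)
    calc spectralRadius ℂ A ≤ ‖μ₀‖₊ := h1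
      _ < 1 := by
        rw [← ENNReal.coe_one, ENNReal.coe_lt_coe, ← NNReal.coe_lt_coe]
        simpa using hr μ₀ hμ₀

theorem stmt11
    (m : ℕ)
    (F : Fin m → Fin m → ℝ → ℝ) (L : Matrix (Fin m) (Fin m) ℝ)
    (hL_nonneg : ∀ i j, 0 ≤ L i j)
    (hLip : ∀ i j u v, |F i j u - F i j v| ≤ L i j * |u - v|)
    (hr : ∀ μ : ℂ, μ ∈ spectrum ℂ (L.map (Complex.ofReal)) → ‖μ‖ < 1) :
    ∃! u : Fin m → ℝ, ∀ i, u i = ∑ j, F i j (u j) := by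
  set A := L.map (Complex.ofReal) with hA
  -- find n with ‖A ^ n‖ < 1
  have hrad : spectralRadius ℂ A < 1 := aux_specrad A hr
  have hgel := spectrum.pow_nnnorm_pow_one_div_tendsto_nhds_spectralRadius A
  have hev : ∀ᶠ n : ℕ in atTop, (‖A ^ n‖₊ : ℝ≥0∞) ^ (1 / (n:ℝ)) < 1 :=
    hgel.eventually_lt_const hrad
  obtain ⟨n, hn1, hnlt⟩ : ∃ n : ℕ, 1 ≤ n ∧ (‖A ^ n‖₊ : ℝ≥0∞) ^ (1 / (n:ℝ)) < 1 := by
    obtain ⟨n, h1, h2⟩ := ((eventually_ge_atTop 1).and hev).exists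
    exact ⟨n, h1, h2⟩
  have hpos : (0:ℝ) < 1 / n := by positivity
  have hAn : ‖A ^ n‖₊ < 1 := by
    by_contra hc
    push_neg at hc
    exact absurd (ENNReal.one_le_rpow (x := (‖A ^ n‖₊ : ℝ≥0∞)) (by exact_mod_cast hc) hpos) hnlt.not_ge
  -- relate to the real matrix norm
  have hmap : A ^ n = (L ^ n).map Complex.ofReal := by
    exact (map_pow (Complex.ofRealHom.mapMatrix) L n).symm
  have hKn : ‖L ^ n‖₊ = ‖A ^ n‖₊ := by
    rw [hmap]
    simp [Matrix.linfty_opNNNorm_def, Matrix.map_apply]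
  set K : NNReal := ‖L ^ n‖₊ with hK
  have hK1 : K < 1 := by
    rw [hKn]; exact_mod_cast hAn
  -- the map
  set T : (Fin m → ℝ) → (Fin m → ℝ) := fun u i => ∑ j, F i j (u j) with hT
  have hstep : ∀ u v : Fin m → ℝ, ∀ i, |T u i - T v i| ≤ (L *ᵥ fun j => |u j - v j|) i := by
    intro u v i
    calc |T u i - T v i| = |∑ j, (F i j (u j) - F i j (v j))| := by
          rw [hT]; simp [Finset.sum_sub_distrib]
      _ ≤ ∑ j, |F i j (u j) - F i j (v j)| := Finset.abs_sum_le_sum_abs _ _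
      _ ≤ ∑ j, L i j * |u j - v j| := Finset.sum_le_sum fun j _ => hLip i j _ _
      _ = _ := by simp [Matrix.mulVec, dotProduct]
  have hiter : ∀ (k : ℕ) (u v : Fin m → ℝ) (i : Fin m),
      |T^[k] u i - T^[k] v i| ≤ ((L ^ k) *ᵥ fun j => |u j - v j|) i := by
    intro k
    induction k with
    | zero => intro u v i; simp [Matrix.mulVec, dotProduct, Matrix.one_apply]
    | succ k ih =>
      intro u v i
      rw [Function.iterate_succ_apply', Function.iterate_succ_apply']
      calc |T (T^[k] u) i - T (T^[k] v) i|
          ≤ (L *ᵥ fun j => |T^[k] u j - T^[k] v j|) i := hstep _ _ i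
        _ ≤ (L *ᵥ ((L ^ k) *ᵥ fun j => |u j - v j|)) i := by
            simp only [Matrix.mulVec, dotProduct]
            exact Finset.sum_le_sum fun j _ =>
              mul_le_mul_of_nonneg_left (ih u v j) (hL_nonneg i j)
        _ = _ := by rw [Matrix.mulVec_mulVec, ← pow_succ']
  have hlip : LipschitzWith K (T^[n]) := by
    apply LipschitzWith.of_dist_le_mul
    intro u v
    rw [dist_eq_norm, dist_eq_norm]
    have habs : ‖(fun j => |u j - v j|)‖ = ‖u - v‖ := by
      simp only [Pi.norm_def]
      congr 1
      refine Finset.sup_congr rfl fun j _ => ?_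
      simp [Pi.sub_apply, Real.nnnorm_abs]
    have h1 : ∀ i, ‖(T^[n] u - T^[n] v) i‖ ≤ (K : ℝ) * ‖u - v‖ := by
      intro i
      calc ‖(T^[n] u - T^[n] v) i‖ = |T^[n] u i - T^[n] v i| := rfl
        _ ≤ ((L ^ n) *ᵥ fun j => |u j - v j|) i := hiter n u v i
        _ ≤ ‖(L ^ n) *ᵥ fun j => |u j - v j|‖ :=
            le_trans (le_abs_self _)
              (by simpa using norm_le_pi_norm ((L ^ n) *ᵥ fun j => |u j - v j|) i)
        _ ≤ ‖L ^ n‖ * ‖(fun j => |u j - v j|)‖ := Matrix.linfty_opNorm_mulVec _ _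
        _ = (K : ℝ) * ‖u - v‖ := by rw [habs, hK, coe_nnnorm]
    exact (pi_norm_le_iff_of_nonneg (by positivity)).mpr h1
  have hcontr : ContractingWith K (T^[n]) := ⟨hK1, hlip⟩
  have hxfix : Function.IsFixedPt T (hcontr.fixedPoint (T^[n])) :=
    hcontr.isFixedPt_fixedPoint_iterate
  refine ⟨hcontr.fixedPoint (T^[n]), fun i => (congrFun hxfix i).symm, fun y hy => ?_⟩
  have hyfix : Function.IsFixedPt T y := funext fun i => (hy i).symm
  exact hcontr.fixedPoint_unique (hyfix.iterate n)
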